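/- Let ξ̄ : ℝ → ℝ be Lipschitz continuous, nondecreasing, bounded from below, and convex. Then 𝖧(ι) is finite for every ι ∈ H, the function 𝖧 : H → ℝ is bounded from below (by inf ξ̄), convex, and Lipschitz continuous with respect to the L² norm on H. -/

import Mathlib

open MeasureTheory

/-- Lebesgue measure restricted to `[0,1)`. -/
noncomputable def mu0 : Measure ℝ := volume.restrict (Set.Ico (0 : ℝ) 1)

/-- The Hilbert space `H = L²([0,1))`. -/
noncomputable abbrev Hsp : Type := Lp ℝ 2 mu0

/-- The cone `C ⊂ H` of (classes of) functions with a nondecreasing nonnegative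
representative on `[0,1)`. -/
def coneC : Set Hsp :=
  {f | ∃ g : ℝ → ℝ, MonotoneOn g (Set.Ico 0 1) ∧ (∀ x ∈ Set.Ico (0 : ℝ) 1, 0 ≤ g x) ∧
    (f : ℝ → ℝ) =ᵐ[mu0] g}

/-- The dual cone `C*` of `C` in `H`. -/
noncomputable def dualC : Set Hsp := {ι | ∀ ρ ∈ coneC, 0 ≤ inner (𝕜 := ℝ) ι ρ}

/-- The regularized nonlinearity `𝖧(ι) = inf { ∫₀¹ ξ̄(ν(s)) ds : ν ∈ C, ν - ι ∈ C* }`,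
valued in `ℝ ∪ {+∞}` (the infimum of the empty set being `+∞`). -/
noncomputable def HH (ξb : ℝ → ℝ) (ι : Hsp) : EReal :=
  sInf {x : EReal | ∃ ν ∈ coneC, ν - ι ∈ dualC ∧ x = ((∫ s, ξb (ν s) ∂mu0 : ℝ) : EReal)}

open Filter Topology
set_option synthInstance.maxHeartbeats 1000000
set_option maxHeartbeats 1000000

instance : IsProbabilityMeasure mu0 := by
  constructor; simp [mu0, Real.volume_Ico]

lemma integrable_Hsp (f : Hsp) : Integrable (f : ℝ → ℝ) mu0 :=
  (Lp.memLp f).integrable one_le_two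

lemma zero_mem_coneC : (0 : Hsp) ∈ coneC :=
  ⟨0, monotoneOn_const, fun _ _ => le_refl 0, Lp.coeFn_zero ℝ 2 mu0⟩

lemma add_mem_coneC {f g : Hsp} (hf : f ∈ coneC) (hg : g ∈ coneC) : f + g ∈ coneC := by
  obtain ⟨F, hFm, hF0, hFe⟩ := hf
  obtain ⟨G, hGm, hG0, hGe⟩ := hg
  refine ⟨F + G, hFm.add hGm, fun x hx => add_nonneg (hF0 x hx) (hG0 x hx), ?_⟩
  filter_upwards [Lp.coeFn_add f g, hFe, hGe] with x h1 h2 h3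
  rw [Pi.add_apply] at h1
  rw [Pi.add_apply, h1, h2, h3]

lemma smul_mem_coneC {f : Hsp} {c : ℝ} (hc : 0 ≤ c) (hf : f ∈ coneC) : c • f ∈ coneC := by
  obtain ⟨F, hFm, hF0, hFe⟩ := hf
  refine ⟨c • F, ?_, fun x hx => smul_nonneg hc (hF0 x hx), ?_⟩
  · exact fun x hx y hy hxy => by
      simpa using mul_le_mul_of_nonneg_left (hFm hx hy hxy) hc
  · filter_upwards [Lp.coeFn_smul c f, hFe] with x h1 h2
    rw [Pi.smul_apply] at h1
    rw [Pi.smul_apply, h1, h2]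

lemma convex_coneC : Convex ℝ coneC := by
  intro f hf g hg a b ha hb _
  exact add_mem_coneC (smul_mem_coneC ha hf) (smul_mem_coneC hb hg)

lemma isClosed_coneC : IsClosed coneC := by
  rw [← isSeqClosed_iff_isClosed]
  intro f f0 hf hlim
  obtain ⟨ns, -, hae⟩ := (tendstoInMeasure_of_tendsto_Lp hlim).exists_seq_tendsto_ae
  choose g hgm hg0 hge using hf
  set S : Set ℝ := {s | s ∈ Set.Ico (0:ℝ) 1 ∧
    Tendsto (fun k => g (ns k) s) atTop (𝓝 ((f0 : ℝ → ℝ) s))} with hS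
  have hSae : ∀ᵐ s ∂mu0, s ∈ S := by
    have h1 : ∀ᵐ s ∂mu0, ∀ k, (f (ns k) : ℝ → ℝ) s = g (ns k) s :=
      ae_all_iff.2 fun k => hge (ns k)
    have h2 : ∀ᵐ s ∂mu0, s ∈ Set.Ico (0:ℝ) 1 := ae_restrict_mem measurableSet_Ico
    filter_upwards [h1, hae, h2] with s hs1 hs2 hs3
    refine ⟨hs3, ?_⟩
    have : (fun k => g (ns k) s) = fun k => (f (ns k) : ℝ → ℝ) s := by
      funext k; exact (hs1 k).symm
    rw [this]; exact hs2
  have hSsub : S ⊆ Set.Ico (0:ℝ) 1 := fun s hs => hs.1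
  have hmonoS : ∀ x ∈ S, ∀ y ∈ S, x ≤ y → (f0 : ℝ → ℝ) x ≤ (f0 : ℝ → ℝ) y := by
    intro x hx y hy hxy
    exact le_of_tendsto_of_tendsto' hx.2 hy.2 fun k => hgm (ns k) hx.1 hy.1 hxy
  have hnonnegS : ∀ x ∈ S, 0 ≤ (f0 : ℝ → ℝ) x := by
    intro x hx
    exact ge_of_tendsto' hx.2 fun k => hg0 (ns k) x hx.1 |>.trans_eq rfl
  have hne : ∀ x ∈ Set.Ico (0:ℝ) 1, ((f0 : ℝ → ℝ) '' (S ∩ Set.Ici x)).Nonempty := by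
    intro x hx
    rcases Set.eq_empty_or_nonempty (S ∩ Set.Ici x) with hemp | hne
    · exfalso
      have hsub : Set.Ico x 1 ⊆ Sᶜ := by
        intro y hy
        intro hyS
        exact Set.eq_empty_iff_forall_notMem.1 hemp y ⟨hyS, hy.1⟩
      have h0 : mu0 Sᶜ = 0 := by
        rw [ae_iff] at hSae; exact hSae
      have h1 : mu0 (Set.Ico x 1) ≤ 0 := h0 ▸ measure_mono hsub
      have h2 : mu0 (Set.Ico x 1) = ENNReal.ofReal (1 - x) := by
        rw [mu0, Measure.restrict_apply measurableSet_Ico]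
        rw [Set.Ico_inter_Ico, max_eq_left hx.1, min_self, Real.volume_Ico]
      rw [h2] at h1
      have : (0:ℝ) < 1 - x := by linarith [hx.2]
      simp [ENNReal.ofReal_eq_zero, le_zero_iff] at h1
      linarith
    · exact hne.image _
  have hbdd : ∀ x : ℝ, BddBelow ((f0 : ℝ → ℝ) '' (S ∩ Set.Ici x)) := by
    intro x
    exact ⟨0, fun b ⟨s, hs, hsb⟩ => hsb ▸ hnonnegS s hs.1⟩
  set G : ℝ → ℝ := fun x => sInf ((f0 : ℝ → ℝ) '' (S ∩ Set.Ici x)) with hG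
  refine ⟨G, ?_, ?_, ?_⟩
  · intro x hx y hy hxy
    exact csInf_le_csInf (hbdd x) (hne y hy)
      (Set.image_mono (Set.inter_subset_inter_right _ (Set.Ici_subset_Ici.2 hxy)))
  · intro x hx
    exact le_csInf (hne x hx) fun b ⟨s, hs, hsb⟩ => hsb ▸ hnonnegS s hs.1
  · filter_upwards [hSae] with s hs
    refine le_antisymm ?_ (csInf_le (hbdd s) ⟨s, ⟨hs, le_refl s⟩, rfl⟩)
    exact le_csInf (hne s (hSsub hs)) fun b ⟨y, hy, hyb⟩ => hyb ▸ hmonoS s hs y hy.1 hy.2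

lemma exists_proj (ι : Hsp) :
    ∃ ν ∈ coneC, ∀ ρ ∈ coneC, inner (𝕜 := ℝ) (ι - ν) (ρ - ν) ≤ 0 := by
  obtain ⟨ν, hν, hmin⟩ := exists_norm_eq_iInf_of_complete_convex ⟨0, zero_mem_coneC⟩
    isClosed_coneC.isComplete convex_coneC ι
  exact ⟨ν, hν, (norm_eq_iInf_iff_real_inner_le_zero convex_coneC hν).1 hmin⟩

lemma proj_sub_mem_dualC {ι ν : Hsp} (hν : ν ∈ coneC)
    (h : ∀ ρ ∈ coneC, inner (𝕜 := ℝ) (ι - ν) (ρ - ν) ≤ 0) : ν - ι ∈ dualC := by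
  intro ρ hρ
  have h1 := h (ν + ρ) (add_mem_coneC hν hρ)
  rw [add_sub_cancel_left] at h1
  have : inner (𝕜 := ℝ) (ν - ι) ρ = - inner (𝕜 := ℝ) (ι - ν) ρ := by
    rw [← inner_neg_left]; norm_num
  rw [this]; linarith

lemma proj_norm_le {ι ν : Hsp} (hν : ν ∈ coneC)
    (h : ∀ ρ ∈ coneC, inner (𝕜 := ℝ) (ι - ν) (ρ - ν) ≤ 0) : ‖ν‖ ≤ ‖ι‖ := by
  have h1 := h 0 zero_mem_coneC
  rw [zero_sub, inner_neg_right] at h1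
  have h2 : ‖ν‖ ^ 2 ≤ inner (𝕜 := ℝ) ι ν := by
    have := real_inner_self_eq_norm_sq ν
    have h3 : inner (𝕜 := ℝ) (ι - ν) ν = inner (𝕜 := ℝ) ι ν - inner (𝕜 := ℝ) ν ν := by
      rw [inner_sub_left]
    nlinarith
  have h4 := real_inner_le_norm ι ν
  nlinarith [norm_nonneg ν, norm_nonneg ι]

lemma add_mem_dualC {x y : Hsp} (hx : x ∈ dualC) (hy : y ∈ dualC) : x + y ∈ dualC := by
  intro ρ hρ
  rw [inner_add_left]
  exact add_nonneg (hx ρ hρ) (hy ρ hρ)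

lemma smul_mem_dualC {x : Hsp} {c : ℝ} (hc : 0 ≤ c) (hx : x ∈ dualC) : c • x ∈ dualC := by
  intro ρ hρ
  rw [real_inner_smul_left]
  exact mul_nonneg hc (hx ρ hρ)

section xi
variable {ξb : ℝ → ℝ} {K : NNReal} (hK : LipschitzWith K ξb)

include hK in
lemma integrable_comp' (f : Hsp) : Integrable (fun s => ξb ((f : ℝ → ℝ) s)) mu0 := by
  refine Integrable.mono' (((integrable_Hsp f).abs.const_mul K).add (integrable_const |ξb 0|))
    (hK.continuous.comp_aestronglyMeasurable (Lp.aestronglyMeasurable f)) ?_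
  refine Eventually.of_forall fun s => ?_
  have h1 : |ξb ((f : ℝ → ℝ) s) - ξb 0| ≤ K * |(f : ℝ → ℝ) s| := by
    have := hK.dist_le_mul ((f : ℝ → ℝ) s) 0
    simpa [Real.dist_eq] using this
  have := abs_sub_abs_le_abs_sub (ξb ((f : ℝ → ℝ) s)) (ξb 0)
  simp only [Pi.add_apply, Real.norm_eq_abs]
  linarith [abs_abs (ξb 0)]

lemma sInf_le_xi (hbdd : ∃ c : ℝ, ∀ r : ℝ, c ≤ ξb r) (r : ℝ) :
    sInf (Set.range ξb) ≤ ξb r := by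
  obtain ⟨c, hc⟩ := hbdd
  exact csInf_le ⟨c, fun y ⟨r', hr'⟩ => hr' ▸ hc r'⟩ (Set.mem_range_self r)

include hK in
lemma integral_lb (hbdd : ∃ c : ℝ, ∀ r : ℝ, c ≤ ξb r) (f : Hsp) :
    sInf (Set.range ξb) ≤ ∫ s, ξb ((f : ℝ → ℝ) s) ∂mu0 := by
  have := integral_mono (integrable_const (sInf (Set.range ξb))) (integrable_comp' hK f)
    (fun s => sInf_le_xi hbdd ((f : ℝ → ℝ) s))
  simpa using this

lemma integral_abs_le_norm (w : Hsp) : ∫ s, |(w : ℝ → ℝ) s| ∂mu0 ≤ ‖w‖ := by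
  have h1 : ∫ s, |(w : ℝ → ℝ) s| ∂mu0 = (eLpNorm (w : ℝ → ℝ) 1 mu0).toReal := by
    rw [eLpNorm_one_eq_lintegral_enorm]
    simpa [Real.norm_eq_abs] using
      integral_norm_eq_lintegral_enorm (Lp.aestronglyMeasurable w)
  rw [h1, Lp.norm_def]
  exact ENNReal.toReal_mono (Lp.eLpNorm_ne_top w)
    (eLpNorm_le_eLpNorm_of_exponent_le one_le_two (Lp.aestronglyMeasurable w))

include hK in
lemma integral_shift_le (ν w : Hsp) :
    ∫ s, ξb (((ν + w : Hsp) : ℝ → ℝ) s) ∂mu0 ≤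
      (∫ s, ξb ((ν : ℝ → ℝ) s) ∂mu0) + K * ‖w‖ := by
  have h1 : (fun s => ξb (((ν + w : Hsp) : ℝ → ℝ) s)) ≤ᵐ[mu0]
      fun s => ξb ((ν : ℝ → ℝ) s) + K * |(w : ℝ → ℝ) s| := by
    filter_upwards [Lp.coeFn_add ν w] with s hs
    rw [hs, Pi.add_apply]
    have h2 := hK.dist_le_mul ((ν : ℝ → ℝ) s + (w : ℝ → ℝ) s) ((ν : ℝ → ℝ) s)
    rw [Real.dist_eq, Real.dist_eq, add_sub_cancel_left] at h2
    linarith [le_abs_self (ξb ((ν : ℝ → ℝ) s + (w : ℝ → ℝ) s) - ξb ((ν : ℝ → ℝ) s)), h2]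
  have h3 := integral_mono_ae (integrable_comp' hK (ν + w))
    (((integrable_comp' hK ν)).add
      (((Lp.memLp w).integrable one_le_two).abs.const_mul K)) h1
  simp only [Pi.add_apply] at h3
  rw [integral_add (integrable_comp' hK ν)
    (((Lp.memLp w).integrable one_le_two).abs.const_mul K), integral_const_mul] at h3
  have h4 := integral_abs_le_norm w
  have hKn : (0:ℝ) ≤ K := K.2
  nlinarith

include hK in
lemma integral_combo_le (hconv : ConvexOn ℝ Set.univ ξb)
    (ν ν' : Hsp) {a b : ℝ} (ha : 0 ≤ a) (hb : 0 ≤ b) (hab : a + b = 1) :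
    ∫ s, ξb (((a • ν + b • ν' : Hsp) : ℝ → ℝ) s) ∂mu0 ≤
      a * (∫ s, ξb ((ν : ℝ → ℝ) s) ∂mu0) + b * (∫ s, ξb ((ν' : ℝ → ℝ) s) ∂mu0) := by
  have h1 : (fun s => ξb (((a • ν + b • ν' : Hsp) : ℝ → ℝ) s)) ≤ᵐ[mu0]
      fun s => a * ξb ((ν : ℝ → ℝ) s) + b * ξb ((ν' : ℝ → ℝ) s) := by
    filter_upwards [Lp.coeFn_add (a • ν) (b • ν'), Lp.coeFn_smul a ν, Lp.coeFn_smul b ν']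
      with s hs hs1 hs2
    rw [hs, Pi.add_apply, hs1, hs2, Pi.smul_apply, Pi.smul_apply, smul_eq_mul, smul_eq_mul]
    exact hconv.2 (Set.mem_univ _) (Set.mem_univ _) ha hb hab
  have h3 := integral_mono_ae (integrable_comp' hK (a • ν + b • ν'))
    (((integrable_comp' hK ν).const_mul a).add
      ((integrable_comp' hK ν').const_mul b)) h1
  simp only [Pi.add_apply] at h3
  rwa [integral_add ((integrable_comp' hK ν).const_mul a)
    ((integrable_comp' hK ν').const_mul b), integral_const_mul,
    integral_const_mul] at h3

/-- The feasible set of values, as a set of reals. -/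
def Aset (ξb : ℝ → ℝ) (ι : Hsp) : Set ℝ :=
  {x | ∃ ν ∈ coneC, ν - ι ∈ dualC ∧ x = ∫ s, ξb ((ν : ℝ → ℝ) s) ∂mu0}

lemma Aset_nonempty (ι : Hsp) : (Aset ξb ι).Nonempty := by
  obtain ⟨ν, hν, hproj⟩ := exists_proj ι
  exact ⟨_, ν, hν, proj_sub_mem_dualC hν hproj, rfl⟩

include hK in
lemma Aset_bddBelow (hbdd : ∃ c : ℝ, ∀ r : ℝ, c ≤ ξb r) (ι : Hsp) :
    BddBelow (Aset ξb ι) := by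
  refine ⟨sInf (Set.range ξb), fun x hx => ?_⟩
  obtain ⟨ν, -, -, rfl⟩ := hx
  exact integral_lb hK hbdd ν

include hK in
lemma HH_eq (hbdd : ∃ c : ℝ, ∀ r : ℝ, c ≤ ξb r) (ι : Hsp) :
    HH ξb ι = ((sInf (Aset ξb ι) : ℝ) : EReal) := by
  have hset : {x : EReal | ∃ ν ∈ coneC, ν - ι ∈ dualC ∧
      x = ((∫ s, ξb (ν s) ∂mu0 : ℝ) : EReal)} = (fun r : ℝ => (r : EReal)) '' Aset ξb ι := by
    ext x
    constructor
    · rintro ⟨ν, hν, hd, rfl⟩; exact ⟨_, ⟨ν, hν, hd, rfl⟩, rfl⟩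
    · rintro ⟨r, ⟨ν, hν, hd, rfl⟩, rfl⟩; exact ⟨ν, hν, hd, rfl⟩
  rw [HH, hset]
  have hne := Aset_nonempty (ξb := ξb) ι
  have hbb := Aset_bddBelow hK hbdd ι
  have hge : ((sInf (Aset ξb ι) : ℝ) : EReal) ≤ sInf ((fun r : ℝ => (r : EReal)) '' Aset ξb ι) := by
    refine le_sInf ?_
    rintro x ⟨r, hr, rfl⟩
    exact EReal.coe_le_coe_iff.2 (csInf_le hbb hr)
  refine le_antisymm ?_ hge
  obtain ⟨y0, hy0⟩ := id hne
  have hle : sInf ((fun r : ℝ => (r : EReal)) '' Aset ξb ι) ≤ (y0 : EReal) :=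
    sInf_le ⟨y0, hy0, rfl⟩
  set S := sInf ((fun r : ℝ => (r : EReal)) '' Aset ξb ι) with hSdef
  have hnt : S ≠ ⊤ := (hle.trans_lt (EReal.coe_lt_top y0)).ne
  have hnb : S ≠ ⊥ := by
    intro h
    rw [h] at hge
    exact (EReal.bot_lt_coe _).not_ge hge
  by_contra hcon
  push_neg at hcon
  have ht : S = ((S.toReal : ℝ) : EReal) := (EReal.coe_toReal hnt hnb).symm
  rw [ht] at hcon
  have h2 : sInf (Aset ξb ι) < S.toReal := EReal.coe_lt_coe_iff.1 hcon
  obtain ⟨y, hy, hyt⟩ := exists_lt_of_csInf_lt hne h2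
  have : S ≤ (y : EReal) := sInf_le ⟨y, hy, rfl⟩
  rw [ht] at this
  exact absurd (EReal.coe_le_coe_iff.1 this) (not_le.2 hyt)

end xi

theorem stmt13 (ξb : ℝ → ℝ) (hlip : ∃ K : NNReal, LipschitzWith K ξb)
    (hmono : Monotone ξb) (hbdd : ∃ c : ℝ, ∀ r : ℝ, c ≤ ξb r)
    (hconv : ConvexOn ℝ Set.univ ξb) :
    (∀ ι : Hsp, ∃ x : ℝ, HH ξb ι = (x : EReal)) ∧
    (∀ ι : Hsp, ((sInf (Set.range ξb) : ℝ) : EReal) ≤ HH ξb ι) ∧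
    ConvexOn ℝ Set.univ (fun ι : Hsp => (HH ξb ι).toReal) ∧
    (∃ K : NNReal, LipschitzWith K (fun ι : Hsp => (HH ξb ι).toReal)) := by
  obtain ⟨K, hK⟩ := hlip
  have hEq := HH_eq hK hbdd
  have htoReal : ∀ ι : Hsp, (HH ξb ι).toReal = sInf (Aset ξb ι) := by
    intro ι; rw [hEq ι]; exact EReal.toReal_coe _
  have hne : ∀ ι : Hsp, (Aset ξb ι).Nonempty := Aset_nonempty
  have hbb : ∀ ι : Hsp, BddBelow (Aset ξb ι) := Aset_bddBelow hK hbdd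
  have hlipside : ∀ ι ι' : Hsp, sInf (Aset ξb ι) ≤ sInf (Aset ξb ι') + K * ‖ι - ι'‖ := by
    intro ι ι'
    refine le_of_forall_pos_le_add fun ε hε => ?_
    obtain ⟨x', hx', hxlt⟩ := exists_lt_of_csInf_lt (hne ι')
      (lt_add_of_pos_right _ hε)
    obtain ⟨ν', hν', hd', rfl⟩ := hx'
    obtain ⟨w, hw, hwproj⟩ := exists_proj (ι - ι')
    have hmem : (∫ s, ξb (((ν' + w : Hsp) : ℝ → ℝ) s) ∂mu0) ∈ Aset ξb ι := by
      refine ⟨ν' + w, add_mem_coneC hν' hw, ?_, rfl⟩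
      have halg : ν' + w - ι = (ν' - ι') + (w - (ι - ι')) := by abel
      rw [halg]
      exact add_mem_dualC hd' (proj_sub_mem_dualC hw hwproj)
    have h1 : sInf (Aset ξb ι) ≤ ∫ s, ξb (((ν' + w : Hsp) : ℝ → ℝ) s) ∂mu0 :=
      csInf_le (hbb ι) hmem
    have h2 := integral_shift_le hK ν' w
    have h3 : (K : ℝ) * ‖w‖ ≤ K * ‖ι - ι'‖ :=
      mul_le_mul_of_nonneg_left (proj_norm_le hw hwproj) K.2
    linarith
  refine ⟨fun ι => ⟨sInf (Aset ξb ι), hEq ι⟩, ?_, ?_, ?_⟩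
  · intro ι
    rw [hEq ι]
    exact EReal.coe_le_coe_iff.2
      (le_csInf (hne ι) (by rintro b ⟨ν, -, -, rfl⟩; exact integral_lb hK hbdd ν))
  · refine ⟨convex_univ, ?_⟩
    intro ι _ ι' _ a b ha hb hab
    simp only [htoReal, smul_eq_mul]
    refine le_of_forall_pos_le_add fun ε hε => ?_
    have hε2 : (0:ℝ) < ε / 2 := by linarith
    obtain ⟨x, hx, hxlt⟩ := exists_lt_of_csInf_lt (hne ι) (lt_add_of_pos_right _ hε2)
    obtain ⟨ν, hν, hd, rfl⟩ := hx
    obtain ⟨x', hx', hxlt'⟩ := exists_lt_of_csInf_lt (hne ι') (lt_add_of_pos_right _ hε2)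
    obtain ⟨ν', hν', hd', rfl⟩ := hx'
    have hmem : (∫ s, ξb (((a • ν + b • ν' : Hsp) : ℝ → ℝ) s) ∂mu0) ∈ Aset ξb (a • ι + b • ι') := by
      refine ⟨a • ν + b • ν', convex_coneC hν hν' ha hb hab, ?_, rfl⟩
      have halg : a • ν + b • ν' - (a • ι + b • ι') = a • (ν - ι) + b • (ν' - ι') := by
        rw [smul_sub, smul_sub]; abel
      rw [halg]
      exact add_mem_dualC (smul_mem_dualC ha hd) (smul_mem_dualC hb hd')
    have h1 := csInf_le (hbb (a • ι + b • ι')) hmem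
    have h2 := integral_combo_le hK hconv ν ν' ha hb hab
    have h3 : a * (∫ s, ξb ((ν : ℝ → ℝ) s) ∂mu0) ≤ a * (sInf (Aset ξb ι) + ε / 2) :=
      mul_le_mul_of_nonneg_left hxlt.le ha
    have h4 : b * (∫ s, ξb ((ν' : ℝ → ℝ) s) ∂mu0) ≤ b * (sInf (Aset ξb ι') + ε / 2) :=
      mul_le_mul_of_nonneg_left hxlt'.le hb
    nlinarith [mul_nonneg ha hε2.le, mul_nonneg hb hε2.le]
  · refine ⟨K, LipschitzWith.of_dist_le_mul fun ι ι' => ?_⟩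
    simp only [htoReal]
    rw [Real.dist_eq, dist_eq_norm, abs_sub_le_iff]
    constructor
    · linarith [hlipside ι ι']
    · have := hlipside ι' ι
      rw [norm_sub_rev] at this
      linarith
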